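/- Suppose dim P = 3 and dim R = k. Then every abelian subspace E ⊆ Hom(P,R) satisfies 2 · dim E ≤ 3k, i.e. dim E ≤ 3k/2. -/

import Mathlib

open Module

/-- A linear subspace `E ⊆ Hom(P,R)` is *abelian* (with respect to a bilinear form `Q` on `R`)
if `Q(A u, B u') = Q(B u, A u')` for all `A, B ∈ E` and all `u, u' : P`. -/
def IsAbelianSubspace {P R : Type*} [AddCommGroup P] [Module ℂ P]
    [AddCommGroup R] [Module ℂ R] (Q : R →ₗ[ℂ] R →ₗ[ℂ] ℂ)
    (E : Submodule ℂ (P →ₗ[ℂ] R)) : Prop :=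
  ∀ A ∈ E, ∀ B ∈ E, ∀ u u' : P, Q (A u) (B u') = Q (B u) (A u')

/-- If `dim P = 3` and `dim R = k`, then every abelian subspace `E ⊆ Hom(P,R)` satisfies
`2 * dim E ≤ 3 * k`, i.e. `dim E ≤ 3k/2`. -/
theorem abelian_dim_le_of_rank_three {P R : Type*}
    [AddCommGroup P] [Module ℂ P] [FiniteDimensional ℂ P]
    [AddCommGroup R] [Module ℂ R] [FiniteDimensional ℂ R]
    (k : ℕ) (hP : finrank ℂ P = 3) (hR : finrank ℂ R = k)
    (Q : R →ₗ[ℂ] R →ₗ[ℂ] ℂ)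
    (hsym : ∀ x y, Q x y = Q y x)
    (hnd : ∀ x, (∀ y, Q x y = 0) → x = 0)
    (E : Submodule ℂ (P →ₗ[ℂ] R)) (hE : IsAbelianSubspace Q E) :
    2 * finrank ℂ ↥E ≤ 3 * k := by
  classical
  set QB : LinearMap.BilinForm ℂ R := Q with hQB
  have hrefl : QB.IsRefl := fun x y h => by
    show Q y x = 0
    rw [hsym]; exact h
  have hndeg : QB.Nondegenerate := ⟨fun x h => hnd x h, fun x h => hnd x (fun y => by rw [hsym]; exact h y)⟩
  -- basis of P
  let b : Basis (Fin 3) ℂ P := finBasisOfFinrankEq ℂ P hP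
  set u : P := b 0 with hu
  set v : P := b 1 with hv
  set w : P := b 2 with hw
  -- evaluation maps
  let f : E →ₗ[ℂ] R := (LinearMap.applyₗ u).comp E.subtype
  set K : Submodule ℂ E := LinearMap.ker f with hKdef
  letI iK1 : AddCommGroup K := inferInstance
  letI iK2 : Module ℂ K := inferInstance
  letI iK3 : FiniteDimensional ℂ K := inferInstance
  let g : K →ₗ[ℂ] R := (LinearMap.applyₗ v).comp (E.subtype.comp K.subtype)
  set K₂ : Submodule ℂ K := LinearMap.ker g with hK₂def
  letI iL1 : AddCommGroup K₂ := inferInstance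
  letI iL2 : Module ℂ K₂ := inferInstance
  letI iL3 : FiniteDimensional ℂ K₂ := inferInstance
  let h : K₂ →ₗ[ℂ] R := (LinearMap.applyₗ w).comp (E.subtype.comp (K.subtype.comp K₂.subtype))
  -- membership facts
  have hKu : ∀ A : K, ((A : E) : P →ₗ[ℂ] R) u = 0 := fun A => A.2
  have hK₂u : ∀ A : K₂, (((A : K) : E) : P →ₗ[ℂ] R) u = 0 := fun A => (A : K).2
  have hK₂v : ∀ A : K₂, (((A : K) : E) : P →ₗ[ℂ] R) v = 0 := fun A => A.2
  -- h is injective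
  have hinj : Function.Injective h := by
    intro A A' hAA'
    have hzero : (((A : K) : E) : P →ₗ[ℂ] R) = (((A' : K) : E) : P →ₗ[ℂ] R) := by
      apply b.ext
      intro i
      fin_cases i
      · exact (hK₂u A).trans (hK₂u A').symm
      · exact (hK₂v A).trans (hK₂v A').symm
      · exact hAA'
    exact Subtype.ext (Subtype.ext (Subtype.ext hzero))
  set V : Submodule ℂ R := LinearMap.range f with hV
  set V₂ : Submodule ℂ R := LinearMap.range g with hV₂
  -- orthogonality facts from the abelian condition
  have hV₂perp : V₂ ≤ QB.orthogonal V := by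
    rintro x ⟨A, rfl⟩
    rintro y ⟨B, rfl⟩
    have habel := hE (((A : E) : P →ₗ[ℂ] R)) ((A : E)).2 (((B : E) : P →ₗ[ℂ] R)) B.2 v u
    show Q (((B : E) : P →ₗ[ℂ] R) u) (((A : E) : P →ₗ[ℂ] R) v) = 0
    rw [hsym, habel, hKu A]
    simp
  have hranh_V : LinearMap.range h ≤ QB.orthogonal V := by
    rintro x ⟨A, rfl⟩
    rintro y ⟨B, rfl⟩
    have habel := hE ((((A : K) : E)) : P →ₗ[ℂ] R) (((A : K) : E)).2
      (((B : E)) : P →ₗ[ℂ] R) B.2 w u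
    show Q (((B : E) : P →ₗ[ℂ] R) u) ((((A : K) : E) : P →ₗ[ℂ] R) w) = 0
    rw [hsym, habel, hK₂u A]
    simp
  have hranh_V₂ : LinearMap.range h ≤ QB.orthogonal V₂ := by
    rintro x ⟨A, rfl⟩
    rintro y ⟨B, rfl⟩
    have habel := hE ((((A : K) : E)) : P →ₗ[ℂ] R) (((A : K) : E)).2
      ((((B : K) : E)) : P →ₗ[ℂ] R) ((B : K) : E).2 w v
    show Q ((((B : K) : E) : P →ₗ[ℂ] R) v) ((((A : K) : E) : P →ₗ[ℂ] R) w) = 0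
    rw [hsym, habel, hK₂v A]
    simp
  have hranh : LinearMap.range h ≤ QB.orthogonal (V ⊔ V₂) := by
    intro x hx
    intro y hy
    rcases Submodule.mem_sup.mp hy with ⟨y₁, hy₁, y₂, hy₂, rfl⟩
    have h1 : Q y₁ x = 0 := hranh_V hx y₁ hy₁
    have h2 : Q y₂ x = 0 := hranh_V₂ hx y₂ hy₂
    show Q (y₁ + y₂) x = 0
    rw [map_add, LinearMap.add_apply, h1, h2, add_zero]
  -- dimension bookkeeping
  have hEdim : finrank ℂ E = finrank ℂ V + finrank ℂ K :=
    (LinearMap.finrank_range_add_finrank_ker f).symm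
  have hKdim : finrank ℂ K = finrank ℂ V₂ + finrank ℂ K₂ :=
    (LinearMap.finrank_range_add_finrank_ker g).symm
  have hK₂dim : finrank ℂ K₂ = finrank ℂ (LinearMap.range h) :=
    (LinearMap.finrank_range_of_inj hinj).symm
  -- dimension of orthogonals
  have horthV : finrank ℂ (QB.orthogonal V) = k - finrank ℂ V := by
    rw [LinearMap.BilinForm.finrank_orthogonal hndeg V, hR]
  have horthSup : finrank ℂ (QB.orthogonal (V ⊔ V₂)) =
      k - finrank ℂ (V ⊔ V₂ : Submodule ℂ R) := by
    rw [LinearMap.BilinForm.finrank_orthogonal hndeg (V ⊔ V₂), hR]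
  have hb₂le : finrank ℂ V₂ ≤ k - finrank ℂ V := horthV ▸ Submodule.finrank_mono hV₂perp
  have hcle : finrank ℂ (LinearMap.range h) ≤ k - finrank ℂ (V ⊔ V₂ : Submodule ℂ R) :=
    horthSup ▸ Submodule.finrank_mono hranh
  have hsupinf : finrank ℂ (V ⊔ V₂ : Submodule ℂ R) + finrank ℂ (V ⊓ V₂ : Submodule ℂ R)
      = finrank ℂ V + finrank ℂ V₂ := Submodule.finrank_sup_add_finrank_inf_eq V V₂
  have hinfV : finrank ℂ (V ⊓ V₂ : Submodule ℂ R) ≤ finrank ℂ V :=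
    Submodule.finrank_mono inf_le_left
  have hinfV₂ : finrank ℂ (V ⊓ V₂ : Submodule ℂ R) ≤ finrank ℂ V₂ :=
    Submodule.finrank_mono inf_le_right
  have hak : finrank ℂ V ≤ k := hR ▸ Submodule.finrank_le V
  have hsk : finrank ℂ (V ⊔ V₂ : Submodule ℂ R) ≤ k := hR ▸ Submodule.finrank_le _
  omega
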